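/- arXiv:2001.01218 — 5 statements merged into one kernel-verified Lean document; each statement's English description precedes it below -/
import Mathlib

section
/- Let n ≥ 2 and let M_n be the (n−1)×(n−1) integer matrix with rows and columns indexed by 1,…,n−1 whose (i,j) entry is 1 if i+j ≥ n and 0 otherwise (this is the matrix of the compressed zero divisor graph of ℤ_{p^n}). Then the characteristic polynomial det(λI − M_n) equals λ^{n−1} + Σ_{k=1}^{n−1} (−1)^{⌈k/2⌉} · C(⌊(n−1+k)/2⌋, k) · λ^{n−1−k}, where C(a,b) denotes the binomial coefficient. -/
open Polynomial

/-- The `(n-1) × (n-1)` integer matrix of the compressed zero divisor graph of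
`ℤ_{p^n}`: rows and columns are indexed by `1, …, n-1` (via `Fin (n-1)`, where
the index `i : Fin (n-1)` represents the vertex `i+1`), and the `(i,j)` entry
is `1` if `i + j ≥ n` and `0` otherwise. -/
def compressedZdMatrix (n : ℕ) : Matrix (Fin (n - 1)) (Fin (n - 1)) ℤ :=
  fun i j => if n ≤ (i : ℕ) + 1 + ((j : ℕ) + 1) then 1 else 0

/-- The sparse matrix family `X(I - N) - e·J⁽ˢ⁾`: diagonal `X`, superdiagonal `-X`,
and `e` on the shifted antidiagonal `i + j + s + 1 = m`. -/
noncomputable def FmM (m s : ℕ) (e : ℤ[X]) : Matrix (Fin m) (Fin m) ℤ[X] :=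
  Matrix.of fun i j =>
    (if (j : ℕ) = (i : ℕ) then X else if (j : ℕ) = (i : ℕ) + 1 then -X else 0) +
      (if (i : ℕ) + (j : ℕ) + s + 1 = m then e else 0)

lemma FmM_shift (m s : ℕ) (e : ℤ[X]) :
    (FmM (m + 1) (s + 1) e).det = X * (FmM m s e).det := by
  rw [Matrix.det_succ_row _ (Fin.last m)]
  rw [Finset.sum_eq_single (Fin.last m)]
  · have h1 : FmM (m + 1) (s + 1) e (Fin.last m) (Fin.last m) = X := by
      simp [FmM]
      omega
    have h2 : (FmM (m + 1) (s + 1) e).submatrix (Fin.last m).succAbove (Fin.last m).succAbove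
        = FmM m s e := by
      ext i j
      simp only [Matrix.submatrix_apply, Fin.succAbove_last, FmM, Matrix.of_apply,
        Fin.coe_castSucc]
      have h : ((i : ℕ) + (j : ℕ) + (s + 1) + 1 = m + 1) ↔ ((i : ℕ) + (j : ℕ) + s + 1 = m) := by
        omega
      simp only [h]
    rw [h1, h2]
    have : (-1 : ℤ[X]) ^ ((Fin.last m : ℕ) + (Fin.last m : ℕ)) = 1 := by
      rw [Fin.val_last, ← two_mul, pow_mul]
      norm_num
    rw [this, one_mul]
  · intro j _ hj
    have hjv : (j : ℕ) < m := by
      rcases Fin.lt_or_eq_of_le (Fin.le_last j) with h | h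
      · exact h
      · exact absurd h hj
    have : FmM (m + 1) (s + 1) e (Fin.last m) j = 0 := by
      simp only [FmM, Matrix.of_apply, Fin.val_last]
      rw [if_neg (by omega), if_neg (by omega), if_neg (by omega)]
      ring
    rw [this]; ring
  · intro h
    exact absurd (Finset.mem_univ _) h

lemma FmM_corner (m : ℕ) (e : ℤ[X]) :
    (FmM (m + 2) 0 e).det = X * (FmM (m + 1) 1 e).det + e * (FmM (m + 1) 0 (-e)).det := by
  have hz : ((0 : Fin (m + 2)) : ℕ) = 0 := rfl
  have hl : ((Fin.last (m + 1) : Fin (m + 2)) : ℕ) = m + 1 := rfl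
  have hne : (0 : Fin (m + 2)) ≠ Fin.last (m + 1) := by
    simp only [ne_eq, Fin.ext_iff, hz, hl]
    omega
  rw [Matrix.det_succ_column_zero]
  rw [← Finset.sum_subset (Finset.subset_univ ({0, Fin.last (m + 1)} : Finset (Fin (m + 2))))
    (by
      intro x _ hx
      simp only [Finset.mem_insert, Finset.mem_singleton, not_or] at hx
      have hx1 : (x : ℕ) ≠ 0 := fun h => hx.1 (Fin.ext (h.trans hz.symm))
      have hx2 : (x : ℕ) ≠ m + 1 := fun h => hx.2 (by simpa [Fin.ext_iff, hl] using h)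
      have h0 : FmM (m + 2) 0 e x 0 = 0 := by
        simp only [FmM, Matrix.of_apply, hz]
        rw [if_neg (by omega), if_neg (by omega), if_neg (by omega)]
        ring
      rw [h0]; ring)]
  rw [Finset.sum_pair hne]
  have e1 : FmM (m + 2) 0 e 0 0 = X := by
    show (if (0:ℕ) = (0:ℕ) then X else if (0:ℕ) = (0:ℕ) + 1 then -X else 0) +
        (if (0:ℕ) + (0:ℕ) + 0 + 1 = m + 2 then e else 0) = X
    rw [if_pos rfl, if_neg (by omega), add_zero]
  have e2 : FmM (m + 2) 0 e (Fin.last (m + 1)) 0 = e := by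
    show (if (0:ℕ) = m + 1 then X else if (0:ℕ) = (m + 1) + 1 then -X else 0) +
        (if (m + 1) + (0:ℕ) + 0 + 1 = m + 2 then e else 0) = e
    rw [if_neg (by omega), if_neg (by omega), if_pos (by omega), zero_add]
  have s1 : (FmM (m + 2) 0 e).submatrix (Fin.succAbove 0) Fin.succ = FmM (m + 1) 1 e := by
    refine Matrix.ext fun i j => ?_
    simp only [Matrix.submatrix_apply, Fin.succAbove_zero, FmM, Matrix.of_apply, Fin.val_succ]
    have h1 : ((j : ℕ) + 1 = (i : ℕ) + 1) ↔ ((j : ℕ) = (i : ℕ)) := by omega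
    have h2 : ((j : ℕ) + 1 = (i : ℕ) + 1 + 1) ↔ ((j : ℕ) = (i : ℕ) + 1) := by omega
    have h3 : ((i : ℕ) + 1 + ((j : ℕ) + 1) + 0 + 1 = m + 2) ↔
        ((i : ℕ) + (j : ℕ) + 1 + 1 = m + 1) := by omega
    simp only [h1, h2, h3]
  have s2 : (FmM (m + 2) 0 e).submatrix (Fin.last (m + 1)).succAbove Fin.succ
      = -(FmM (m + 1) 0 (-e)).transpose := by
    refine Matrix.ext fun i j => ?_
    simp only [Matrix.submatrix_apply, Fin.succAbove_last, FmM, Matrix.of_apply, Fin.val_succ,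
      Matrix.neg_apply, Matrix.transpose_apply, Fin.coe_castSucc]
    split_ifs <;> first | ring1 | (exfalso; omega)
  rw [e1, e2, s1, s2]
  rw [Matrix.det_neg, Matrix.det_transpose]
  simp only [hz, hl, pow_zero, one_mul, Fintype.card_fin]
  have hpow : (-1 : ℤ[X]) ^ (m + 1) * (-1 : ℤ[X]) ^ (m + 1) = 1 := by
    rw [← pow_add, ← two_mul, pow_mul]
    norm_num
  calc X * (FmM (m + 1) 1 e).det +
        (-1) ^ (m + 1) * e * ((-1) ^ (m + 1) * (FmM (m + 1) 0 (-e)).det)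
      = X * (FmM (m + 1) 1 e).det +
        ((-1) ^ (m + 1) * (-1) ^ (m + 1)) * (e * (FmM (m + 1) 0 (-e)).det) := by ring
    _ = X * (FmM (m + 1) 1 e).det + e * (FmM (m + 1) 0 (-e)).det := by rw [hpow]; ring

lemma FmM_det_one (e : ℤ[X]) : (FmM 1 0 e).det = X + e := by
  rw [Matrix.det_fin_one]
  show (if (0:ℕ) = (0:ℕ) then X else if (0:ℕ) = (0:ℕ) + 1 then -X else 0) +
      (if (0:ℕ) + (0:ℕ) + 0 + 1 = 1 then e else 0) = X + e
  rw [if_pos rfl, if_pos rfl]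

/-- The claimed characteristic polynomial. -/
noncomputable def qP (m : ℕ) : ℤ[X] :=
  X ^ m + ∑ k ∈ Finset.Icc 1 m,
    (-1) ^ ((k + 1) / 2) * (Nat.choose ((m + k) / 2) k : ℤ[X]) * X ^ (m - k)

/-- The companion family: `rP m = (-1)^m · qP m (-X)`. -/
noncomputable def rP (m : ℕ) : ℤ[X] :=
  X ^ m + ∑ k ∈ Finset.Icc 1 m,
    (-1) ^ (k / 2) * (Nat.choose ((m + k) / 2) k : ℤ[X]) * X ^ (m - k)

lemma sum_Icc_to_range (m : ℕ) (f : ℕ → ℤ[X]) :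
    ∑ k ∈ Finset.Icc 1 m, f k = ∑ i ∈ Finset.range m, f (1 + i) := by
  rw [← Finset.Ico_add_one_right_eq_Icc, Finset.sum_Ico_eq_sum_range]
  simp

lemma qP_rec (m : ℕ) : qP (m + 2) = X ^ 2 * qP m - rP (m + 1) := by
  unfold qP rP
  rw [sum_Icc_to_range, sum_Icc_to_range, sum_Icc_to_range]
  set G : ℕ → ℤ[X] := fun i =>
    (-1) ^ ((1 + i + 1) / 2) * (Nat.choose ((m + 1 + i) / 2) (1 + i) : ℤ[X]) * X ^ (m + 1 - i)
    with hG
  set H : ℕ → ℤ[X] := fun i =>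
    (-1) ^ (i / 2) * (Nat.choose ((m + 1 + i) / 2) i : ℤ[X]) * X ^ (m + 1 - i) with hH
  have step1 : X ^ 2 * (X ^ m + ∑ i ∈ Finset.range m,
      (-1) ^ ((1 + i + 1) / 2) * (Nat.choose ((m + (1 + i)) / 2) (1 + i) : ℤ[X]) *
        X ^ (m - (1 + i)))
      = X ^ (m + 2) + ∑ i ∈ Finset.range m, G i := by
    rw [mul_add, Finset.mul_sum, ← pow_add]
    congr 1
    · congr 1; omega
    refine Finset.sum_congr rfl fun i hi => ?_
    have hi' : i < m := Finset.mem_range.mp hi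
    have h1 : (m + (1 + i)) / 2 = (m + 1 + i) / 2 := by congr 1; omega
    have h2 : X ^ 2 * ((-1) ^ ((1 + i + 1) / 2) *
        (Nat.choose ((m + 1 + i) / 2) (1 + i) : ℤ[X]) * X ^ (m - (1 + i)))
        = (-1) ^ ((1 + i + 1) / 2) * (Nat.choose ((m + 1 + i) / 2) (1 + i) : ℤ[X]) *
          X ^ (2 + (m - (1 + i))) := by
      rw [pow_add]; ring
    rw [h1, h2, hG]
    have h3 : 2 + (m - (1 + i)) = m + 1 - i := by omega
    rw [h3]
  have step2 : ∑ i ∈ Finset.range (m + 2), G i = ∑ i ∈ Finset.range m, G i := by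
    rw [Finset.sum_range_succ, Finset.sum_range_succ]
    have gm : G m = 0 := by
      rw [hG]
      have : (m + 1 + m) / 2 = m := by omega
      simp only [this, Nat.choose_eq_zero_of_lt (by omega : m < 1 + m), Nat.cast_zero]
      ring
    have gm1 : G (m + 1) = 0 := by
      rw [hG]
      have : (m + 1 + (m + 1)) / 2 = m + 1 := by omega
      simp only [this, Nat.choose_eq_zero_of_lt (by omega : m + 1 < 1 + (m + 1)),
        Nat.cast_zero]
      ring
    rw [gm, gm1, add_zero, add_zero]
  have step3 : (X ^ (m + 1) + ∑ i ∈ Finset.range (m + 1),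
      (-1) ^ ((1 + i) / 2) * (Nat.choose ((m + 1 + (1 + i)) / 2) (1 + i) : ℤ[X]) *
        X ^ (m + 1 - (1 + i)))
      = ∑ i ∈ Finset.range (m + 2), H i := by
    rw [Finset.sum_range_succ' H]
    have h0 : H 0 = X ^ (m + 1) := by
      rw [hH]
      simp
    rw [h0, add_comm]
    congr 1
    refine Finset.sum_congr rfl fun i _ => ?_
    simp only [hH]
    have h4 : 1 + i = i + 1 := by omega
    rw [h4]
  rw [step1, ← step2, step3, add_sub_assoc, ← Finset.sum_sub_distrib]
  congr 1
  refine Finset.sum_congr rfl fun i _ => ?_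
  simp only [hG, hH]
  have h4 : 1 + i = i + 1 := by omega
  rw [h4]
  have h1 : (m + 2 + (i + 1)) / 2 = (m + 1 + i) / 2 + 1 := by omega
  have h2 : m + 2 - (i + 1) = m + 1 - i := by omega
  have h3 : (i + 1 + 1) / 2 = i / 2 + 1 := by omega
  rw [h1, h2, h3, Nat.choose_succ_succ ((m + 1 + i) / 2) i]
  push_cast
  ring

lemma rP_rec (m : ℕ) : rP (m + 2) = X ^ 2 * rP m + qP (m + 1) := by
  unfold qP rP
  rw [sum_Icc_to_range, sum_Icc_to_range, sum_Icc_to_range]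
  set G : ℕ → ℤ[X] := fun i =>
    (-1) ^ ((1 + i) / 2) * (Nat.choose ((m + 1 + i) / 2) (1 + i) : ℤ[X]) * X ^ (m + 1 - i)
    with hG
  set H : ℕ → ℤ[X] := fun i =>
    (-1) ^ ((i + 1) / 2) * (Nat.choose ((m + 1 + i) / 2) i : ℤ[X]) * X ^ (m + 1 - i) with hH
  have step1 : X ^ 2 * (X ^ m + ∑ i ∈ Finset.range m,
      (-1) ^ ((1 + i) / 2) * (Nat.choose ((m + (1 + i)) / 2) (1 + i) : ℤ[X]) *
        X ^ (m - (1 + i)))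
      = X ^ (m + 2) + ∑ i ∈ Finset.range m, G i := by
    rw [mul_add, Finset.mul_sum, ← pow_add]
    congr 1
    · congr 1; omega
    refine Finset.sum_congr rfl fun i hi => ?_
    have hi' : i < m := Finset.mem_range.mp hi
    have h1 : (m + (1 + i)) / 2 = (m + 1 + i) / 2 := by congr 1; omega
    have h2 : X ^ 2 * ((-1) ^ ((1 + i) / 2) *
        (Nat.choose ((m + 1 + i) / 2) (1 + i) : ℤ[X]) * X ^ (m - (1 + i)))
        = (-1) ^ ((1 + i) / 2) * (Nat.choose ((m + 1 + i) / 2) (1 + i) : ℤ[X]) *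
          X ^ (2 + (m - (1 + i))) := by
      rw [pow_add]; ring
    rw [h1, h2, hG]
    have h3 : 2 + (m - (1 + i)) = m + 1 - i := by omega
    rw [h3]
  have step2 : ∑ i ∈ Finset.range (m + 2), G i = ∑ i ∈ Finset.range m, G i := by
    rw [Finset.sum_range_succ, Finset.sum_range_succ]
    have gm : G m = 0 := by
      rw [hG]
      have : (m + 1 + m) / 2 = m := by omega
      simp only [this, Nat.choose_eq_zero_of_lt (by omega : m < 1 + m), Nat.cast_zero]
      ring
    have gm1 : G (m + 1) = 0 := by
      rw [hG]
      have : (m + 1 + (m + 1)) / 2 = m + 1 := by omega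
      simp only [this, Nat.choose_eq_zero_of_lt (by omega : m + 1 < 1 + (m + 1)),
        Nat.cast_zero]
      ring
    rw [gm, gm1, add_zero, add_zero]
  have step3 : (X ^ (m + 1) + ∑ i ∈ Finset.range (m + 1),
      (-1) ^ ((1 + i + 1) / 2) * (Nat.choose ((m + 1 + (1 + i)) / 2) (1 + i) : ℤ[X]) *
        X ^ (m + 1 - (1 + i)))
      = ∑ i ∈ Finset.range (m + 2), H i := by
    rw [Finset.sum_range_succ' H]
    have h0 : H 0 = X ^ (m + 1) := by
      rw [hH]
      simp
    rw [h0, add_comm]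
    congr 1
    refine Finset.sum_congr rfl fun i _ => ?_
    simp only [hH]
    have h4 : 1 + i = i + 1 := by omega
    rw [h4]
  rw [step1, ← step2, step3, add_assoc, ← Finset.sum_add_distrib]
  congr 1
  refine Finset.sum_congr rfl fun i _ => ?_
  simp only [hG, hH]
  have h4 : 1 + i = i + 1 := by omega
  rw [h4]
  have h1 : (m + 2 + (i + 1)) / 2 = (m + 1 + i) / 2 + 1 := by omega
  have h2 : m + 2 - (i + 1) = m + 1 - i := by omega
  rw [h1, h2, Nat.choose_succ_succ ((m + 1 + i) / 2) i]
  push_cast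
  ring

lemma qP_zero : qP 0 = 1 := by simp [qP]

lemma rP_zero : rP 0 = 1 := by simp [rP]

lemma qP_one : qP 1 = X - 1 := by
  unfold qP
  rw [show Finset.Icc 1 1 = {1} from rfl, Finset.sum_singleton]
  norm_num
  ring

lemma rP_one : rP 1 = X + 1 := by
  unfold rP
  rw [show Finset.Icc 1 1 = {1} from rfl, Finset.sum_singleton]
  norm_num

lemma FmM_det_qr : ∀ m : ℕ, (FmM m 0 (-1)).det = qP m ∧ (FmM m 0 1).det = rP m := by
  intro m
  induction m using Nat.strong_induction_on with
  | _ m ih =>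
    match m with
    | 0 =>
      constructor
      · rw [Matrix.det_fin_zero, qP_zero]
      · rw [Matrix.det_fin_zero, rP_zero]
    | 1 =>
      constructor
      · rw [FmM_det_one, qP_one]; ring
      · rw [FmM_det_one, rP_one]
    | (m + 2) =>
      obtain ⟨h1, h2⟩ := ih m (by omega)
      obtain ⟨h3, h4⟩ := ih (m + 1) (by omega)
      have c1 := FmM_corner m (-1)
      have c2 := FmM_corner m 1
      rw [neg_neg] at c1
      have s1 := FmM_shift m 0 (-1 : ℤ[X])
      have s2 := FmM_shift m 0 (1 : ℤ[X])
      constructor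
      · rw [c1, s1, h1, h4, qP_rec]
        ring
      · rw [c2, s2, h2, h3, rP_rec]
        ring

/-- Upper triangular matrix of ones. -/
noncomputable def Umat (m : ℕ) : Matrix (Fin m) (Fin m) ℤ[X] :=
  Matrix.of fun i j => if (i : ℕ) ≤ (j : ℕ) then 1 else 0

lemma Umat_det (m : ℕ) : (Umat m).det = 1 := by
  rw [Matrix.det_of_upperTriangular]
  · have : ∀ i : Fin m, Umat m i i = 1 := by
      intro i
      simp [Umat]
    simp [this]
  · intro i j hij
    have : (j : ℕ) < (i : ℕ) := hij
    simp only [Umat, Matrix.of_apply]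
    rw [if_neg (by omega)]

lemma charm_eq (n : ℕ) (hn : 2 ≤ n) :
    Matrix.charmatrix (compressedZdMatrix n) = FmM (n - 1) 0 (-1) * Umat (n - 1) := by
  refine Matrix.ext fun i j => ?_
  rw [Matrix.mul_apply]
  have hiv : (i : ℕ) < n - 1 := i.isLt
  have hjv : (j : ℕ) < n - 1 := j.isLt
  have hc : n - 2 - (i : ℕ) < n - 1 := by omega
  have hsplit : ∀ k : Fin (n - 1), FmM (n - 1) 0 (-1) i k * Umat (n - 1) k j
      = (if (k : ℕ) = (i : ℕ) then X * Umat (n - 1) k j else 0)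
        + (if (k : ℕ) = (i : ℕ) + 1 then -X * Umat (n - 1) k j else 0)
        + (if (k : ℕ) = n - 2 - (i : ℕ) then -Umat (n - 1) k j else 0) := by
    intro k
    have hkv : (k : ℕ) < n - 1 := k.isLt
    show ((if (k : ℕ) = (i : ℕ) then X else if (k : ℕ) = (i : ℕ) + 1 then -X else 0) +
        (if (i : ℕ) + (k : ℕ) + 0 + 1 = n - 1 then -1 else 0)) * Umat (n - 1) k j = _
    split_ifs <;> first | ring1 | (exfalso; omega)
  rw [Finset.sum_congr rfl fun k _ => hsplit k]
  rw [Finset.sum_add_distrib, Finset.sum_add_distrib]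
  have sum1 : (∑ k : Fin (n - 1), if (k : ℕ) = (i : ℕ) then X * Umat (n - 1) k j else 0)
      = X * Umat (n - 1) i j := by
    rw [Finset.sum_eq_single i]
    · rw [if_pos rfl]
    · intro k _ hk
      rw [if_neg (fun h => hk (Fin.ext h))]
    · intro h; exact absurd (Finset.mem_univ _) h
  have sum3 : (∑ k : Fin (n - 1), if (k : ℕ) = n - 2 - (i : ℕ) then -Umat (n - 1) k j else 0)
      = -Umat (n - 1) ⟨n - 2 - (i : ℕ), hc⟩ j := by
    rw [Finset.sum_eq_single (⟨n - 2 - (i : ℕ), hc⟩ : Fin (n - 1))]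
    · rw [if_pos rfl]
    · intro k _ hk
      rw [if_neg (fun h => hk (Fin.ext h))]
    · intro h; exact absurd (Finset.mem_univ _) h
  have sum2 : (∑ k : Fin (n - 1), if (k : ℕ) = (i : ℕ) + 1 then -X * Umat (n - 1) k j else 0)
      = -X * (if (i : ℕ) + 1 ≤ (j : ℕ) then 1 else 0) := by
    by_cases h : (i : ℕ) + 1 < n - 1
    · rw [Finset.sum_eq_single (⟨(i : ℕ) + 1, h⟩ : Fin (n - 1))]
      · rw [if_pos rfl]
        simp only [Umat, Matrix.of_apply]
      · intro k _ hk
        rw [if_neg (fun hh => hk (Fin.ext hh))]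
      · intro hh; exact absurd (Finset.mem_univ _) hh
    · rw [Finset.sum_eq_zero, if_neg (by omega)]
      · ring
      · intro k _
        have : (k : ℕ) < n - 1 := k.isLt
        rw [if_neg (by omega)]
  rw [sum1, sum2, sum3]
  simp only [Umat, Matrix.of_apply]
  by_cases hij : i = j
  · subst hij
    rw [Matrix.charmatrix_apply_eq]
    show X - Polynomial.C (if n ≤ (i : ℕ) + 1 + ((i : ℕ) + 1) then 1 else 0) = _
    rw [apply_ite Polynomial.C, map_one, map_zero]
    split_ifs <;> first | ring1 | (exfalso; omega)
  · have hijv : (i : ℕ) ≠ (j : ℕ) := fun h => hij (Fin.ext h)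
    rw [Matrix.charmatrix_apply_ne _ _ _ hij]
    show -Polynomial.C (if n ≤ (i : ℕ) + 1 + ((j : ℕ) + 1) then 1 else 0) = _
    rw [apply_ite Polynomial.C, map_one, map_zero]
    split_ifs <;> first | ring1 | (exfalso; omega)

theorem charpoly_compressedZdMatrix (n : ℕ) (hn : 2 ≤ n) :
    (compressedZdMatrix n).charpoly =
      X ^ (n - 1) +
        ∑ k ∈ Finset.Icc 1 (n - 1),
          (-1) ^ ((k + 1) / 2) * (Nat.choose ((n - 1 + k) / 2) k : ℤ[X]) * X ^ (n - 1 - k) := by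
  have h1 : (compressedZdMatrix n).charpoly = (FmM (n - 1) 0 (-1)).det := by
    rw [Matrix.charpoly, charm_eq n hn, Matrix.det_mul, Umat_det, mul_one]
  rw [h1, (FmM_det_qr (n - 1)).1]
  rfl
end

section
/- Let n ≥ 2 be even and let G_n be the simple graph on vertex set {1,…,n−1} in which distinct vertices i and j are adjacent iff i+j ≥ n (the compressed zero divisor graph of ℤ_{p^n}). Then the Wiener index of G_n equals (n−2)(3n−4)/4. -/
open Finset


/-- The compressed zero divisor graph of `ℤ_{p^n}`: the simple graph on the
vertex set `{1, …, n-1}` (modelled by `Fin (n-1)`, where `i : Fin (n-1)`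
represents the vertex `i+1`) in which distinct vertices `i` and `j` are
adjacent iff `i + j ≥ n`. -/
def compressedZdGraph (n : ℕ) : SimpleGraph (Fin (n - 1)) where
  Adj i j := i ≠ j ∧ n ≤ (i : ℕ) + 1 + ((j : ℕ) + 1)
  symm := by constructor; intro i j h; exact ⟨h.1.symm, by omega⟩
  loopless := by constructor; intro i h; exact h.1 rfl

lemma czd_dist (n : ℕ) (hn : 2 ≤ n) (i j : Fin (n-1)) (hij : i ≠ j) :
    (compressedZdGraph n).dist i j = if n ≤ (i:ℕ) + (j:ℕ) + 2 then 1 else 2 := by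
  split_ifs with h
  · exact SimpleGraph.dist_eq_one_iff_adj.mpr ⟨hij, by omega⟩
  · have hi : (i:ℕ) < n - 1 := i.isLt
    have hj : (j:ℕ) < n - 1 := j.isLt
    set t : Fin (n-1) := ⟨n-2, by omega⟩ with ht
    have hit : (compressedZdGraph n).Adj i t := by
      refine ⟨?_, by simp [ht]; omega⟩
      intro he
      have : (i:ℕ) = n - 2 := by rw [he]
      omega
    have htj : (compressedZdGraph n).Adj t j := by
      refine ⟨?_, by simp [ht]; omega⟩
      intro he
      have : (j:ℕ) = n - 2 := by rw [← he]
      omega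
    let w : (compressedZdGraph n).Walk i j :=
      SimpleGraph.Walk.cons hit (SimpleGraph.Walk.cons htj SimpleGraph.Walk.nil)
    have h2 : (compressedZdGraph n).dist i j ≤ 2 :=
      (SimpleGraph.dist_le w).trans_eq (by simp [w])
    have h0 : (compressedZdGraph n).dist i j ≠ 0 :=
      fun h0 => hij ((SimpleGraph.Reachable.dist_eq_zero_iff ⟨w⟩).mp h0)
    have h1 : (compressedZdGraph n).dist i j ≠ 1 := by
      intro h1
      have := (SimpleGraph.dist_eq_one_iff_adj.mp h1).2
      omega
    omega

lemma czd_inner_sum (m j : ℕ) :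
    ∑ i ∈ range j, (if 2*m+2 ≤ i + j + 2 then (1:ℕ) else 2) = j + min j (2*m - j) := by
  have h1 : ∀ i ∈ range j,
      (if 2*m+2 ≤ i + j + 2 then (1:ℕ) else 2) = 1 + (if i < 2*m - j then 1 else 0) := by
    intro i _; split_ifs <;> omega
  rw [Finset.sum_congr rfl h1, Finset.sum_add_distrib, Finset.sum_const, smul_eq_mul, mul_one,
    ← Finset.card_filter]
  have h2 : (range j).filter (fun i => i < 2*m - j) = range (min j (2*m - j)) := by
    ext i; simp only [Finset.mem_filter, Finset.mem_range]; omega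
  rw [h2]
  simp

lemma czd_minsum (m : ℕ) : ∑ j ∈ range (2*m+1), min j (2*m - j) = m*m := by
  induction m with
  | zero => simp
  | succ m ih =>
    have hr : 2*(m+1)+1 = (2*m+1)+1+1 := by ring
    rw [hr, Finset.sum_range_succ, Finset.sum_range_succ]
    have step : ∀ j ∈ range (2*m+1),
        min j (2*(m+1) - j) = min j (2*m - j) + (if m+1 ≤ j then 2 else 0) := by
      intro j hj
      simp only [Finset.mem_range] at hj
      split_ifs <;> omega
    rw [Finset.sum_congr rfl step, Finset.sum_add_distrib, ih]
    have h3 : ∑ j ∈ range (2*m+1), (if m+1 ≤ j then (2:ℕ) else 0) = 2*m := by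
      rw [← Finset.sum_filter]
      have : (range (2*m+1)).filter (fun j => m+1 ≤ j) = Finset.Ico (m+1) (2*m+1) := by
        ext j; simp; omega
      rw [this, Finset.sum_const, Nat.card_Ico, smul_eq_mul]
      omega
    rw [h3]
    have e1 : min (2*m+1) (2*(m+1) - (2*m+1)) = 1 := by omega
    have e2 : min ((2*m+1)+1) (2*(m+1) - ((2*m+1)+1)) = 0 := by omega
    rw [e1, e2]
    ring

theorem wiener_compressedZdGraph_even (n : ℕ) (hn : 2 ≤ n) (heven : Even n) :
    (∑ p ∈ Finset.univ.filter (fun p : Fin (n - 1) × Fin (n - 1) => p.1 < p.2),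
        (compressedZdGraph n).dist p.1 p.2) = (n - 2) * (3 * n - 4) / 4 := by
  obtain ⟨m, rfl⟩ : ∃ m, n = 2*m+2 := by
    rcases heven with ⟨k, hk⟩; exact ⟨k-1, by omega⟩
  have hN : 2*m+2-1 = 2*m+1 := by omega
  have hA : ∀ p ∈ Finset.univ.filter (fun p : Fin (2*m+2-1) × Fin (2*m+2-1) => p.1 < p.2),
      (compressedZdGraph (2*m+2)).dist p.1 p.2
        = if 2*m+2 ≤ (p.1:ℕ) + (p.2:ℕ) + 2 then 1 else 2 := by
    intro p hp
    simp only [Finset.mem_filter] at hp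
    exact czd_dist _ (by omega) _ _ (Fin.ne_of_lt hp.2)
  rw [Finset.sum_congr rfl hA, Finset.sum_filter, Fintype.sum_prod_type, Finset.sum_comm]
  have hB : ∀ j : Fin (2*m+2-1),
      (∑ i : Fin (2*m+2-1), if i < j then (if 2*m+2 ≤ (i:ℕ) + (j:ℕ) + 2 then 1 else 2) else 0)
        = (j:ℕ) + min (j:ℕ) (2*m - (j:ℕ)) := by
    intro j
    have hc : ∀ i : Fin (2*m+2-1),
        (if i < j then (if 2*m+2 ≤ (i:ℕ) + (j:ℕ) + 2 then 1 else 2) else 0)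
          = (fun a : ℕ => if a < (j:ℕ) then (if 2*m+2 ≤ a + (j:ℕ) + 2 then 1 else 2) else 0) (i:ℕ) := by
      intro i; rfl
    rw [Finset.sum_congr rfl (fun i _ => hc i),
      Fin.sum_univ_eq_sum_range (fun a : ℕ => if a < (j:ℕ) then (if 2*m+2 ≤ a + (j:ℕ) + 2 then 1 else 2) else 0),
      ← Finset.sum_filter]
    have hf : (range (2*m+2-1)).filter (fun a => a < (j:ℕ)) = range (j:ℕ) := by
      ext a
      have := j.isLt
      simp only [Finset.mem_filter, Finset.mem_range]
      omega
    rw [hf, czd_inner_sum]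
  rw [Finset.sum_congr rfl (fun j _ => hB j),
    Fin.sum_univ_eq_sum_range (fun a : ℕ => a + min a (2*m - a)), hN,
    Finset.sum_add_distrib, czd_minsum]
  have hS1 : ∑ j ∈ range (2*m+1), j = 2*(m*m) + m := by
    have h := Finset.sum_range_id_mul_two (2*m+1)
    have h2 : (∑ j ∈ range (2*m+1), j) * 2 = (2*(m*m) + m) * 2 := by
      rw [h]; simp only [Nat.add_sub_cancel]; ring
    exact Nat.eq_of_mul_eq_mul_right two_pos h2
  rw [hS1]
  have hR : (2*m+2-2) * (3*(2*m+2) - 4) / 4 = 3*(m*m) + m := by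
    have e1 : 2*m+2-2 = 2*m := by omega
    have e2 : 3*(2*m+2) - 4 = 6*m+2 := by omega
    rw [e1, e2]
    have : 2*m * (6*m+2) = (3*(m*m)+m) * 4 := by ring
    rw [this, Nat.mul_div_cancel _ (by norm_num)]
  rw [hR]
  ring
end

section
/- Let n ≥ 3 be odd and let G_n be the simple graph on vertex set {1,…,n−1} in which distinct vertices i and j are adjacent iff i+j ≥ n (the compressed zero divisor graph of ℤ_{p^n}). Then the Wiener index of G_n equals (n−1)(3n−7)/4. -/
lemma compressedZdGraph_adj (n : ℕ) (i j : Fin (n-1)) :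
    (compressedZdGraph n).Adj i j ↔ i ≠ j ∧ n ≤ (i : ℕ) + 1 + ((j : ℕ) + 1) := Iff.rfl

lemma compressedZdGraph_dist (n : ℕ) (hn : 3 ≤ n) (i j : Fin (n-1)) (hij : i < j) :
    (compressedZdGraph n).dist i j = if n ≤ (i : ℕ) + (j : ℕ) + 2 then 1 else 2 := by
  have hij' : (i : ℕ) < (j : ℕ) := hij
  have hjlt : (j : ℕ) < n - 1 := j.isLt
  have hne : i ≠ j := Fin.ne_of_lt hij
  split_ifs with h
  · exact SimpleGraph.dist_eq_one_iff_adj.mpr ⟨hne, by omega⟩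
  · set t : Fin (n-1) := ⟨n - 2, by omega⟩ with ht
    have htv : (t : ℕ) = n - 2 := rfl
    have hjt : (j : ℕ) < n - 2 := by omega
    have a1 : (compressedZdGraph n).Adj i t := by
      refine ⟨fun e => ?_, by rw [htv]; omega⟩
      have := congrArg Fin.val e
      omega
    have a2 : (compressedZdGraph n).Adj t j := by
      refine ⟨fun e => ?_, by rw [htv]; omega⟩
      have := congrArg Fin.val e
      omega
    have hle : (compressedZdGraph n).dist i j ≤ 2 := by
      have := SimpleGraph.dist_le (a1.toWalk.append a2.toWalk)
      simpa using this
    have h0 : (compressedZdGraph n).dist i j ≠ 0 := by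
      rw [ne_eq, SimpleGraph.dist_eq_zero_iff_eq_or_not_reachable]
      push_neg
      exact ⟨hne, ⟨a1.toWalk.append a2.toWalk⟩⟩
    have h1 : (compressedZdGraph n).dist i j ≠ 1 := by
      intro e
      have := (SimpleGraph.dist_eq_one_iff_adj.mp e).2
      omega
    omega

lemma zdInnerSum (n v : ℕ) (hn : 3 ≤ n) :
    (∑ i ∈ Finset.range v, (if n ≤ i + v + 2 then 1 else 2)) = 2 * v - (v - (n - v - 2)) := by
  have hsplit : ∀ i ∈ Finset.range v, (if n ≤ i + v + 2 then 1 else 2)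
      = 2 - (if n ≤ i + v + 2 then 1 else 0) := by
    intro i _; split_ifs <;> rfl
  rw [Finset.sum_congr rfl hsplit,
    Finset.sum_tsub_distrib _ (fun i _ => by split_ifs <;> omega)]
  have hfilt : Finset.filter (fun i => n ≤ i + v + 2) (Finset.range v)
      = Finset.Ico (n - v - 2) v := by
    ext i
    simp only [Finset.mem_filter, Finset.mem_range, Finset.mem_Ico]
    omega
  rw [Finset.sum_const, Finset.card_range, smul_eq_mul, Finset.sum_boole, hfilt,
    Nat.cast_id, Nat.card_Ico]
  omega

theorem wiener_compressedZdGraph_odd (n : ℕ) (hn : 3 ≤ n) (hodd : Odd n) :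
    (∑ p ∈ Finset.univ.filter (fun p : Fin (n - 1) × Fin (n - 1) => p.1 < p.2),
        (compressedZdGraph n).dist p.1 p.2) = (n - 1) * (3 * n - 7) / 4 := by
  obtain ⟨k, hk⟩ := hodd
  rw [Finset.sum_finset_product_right _ Finset.univ (fun j => Finset.Iio j)
    (by intro p; simp)]
  have step1 : ∀ j : Fin (n-1), (∑ i ∈ Finset.Iio j, (compressedZdGraph n).dist i j)
      = 2 * (j : ℕ) - ((j : ℕ) - (n - (j : ℕ) - 2)) := by
    intro j
    have : (∑ i ∈ Finset.Iio j, (compressedZdGraph n).dist i j)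
        = ∑ i ∈ Finset.Iio j, (if n ≤ (i : ℕ) + (j : ℕ) + 2 then 1 else 2) := by
      refine Finset.sum_congr rfl fun i hi => ?_
      exact compressedZdGraph_dist n hn i j (Finset.mem_Iio.mp hi)
    rw [this, ← zdInnerSum n (j : ℕ) hn, ← Nat.Iio_eq_range, ← Fin.map_valEmbedding_Iio,
      Finset.sum_map]
    rfl
  rw [Finset.sum_congr rfl (fun j _ => step1 j), Fin.sum_univ_eq_sum_range
    (fun v => 2 * v - (v - (n - v - 2))) (n - 1)]
  -- now pure arithmetic: split the range at k
  have hn1 : n - 1 = 2 * k := by omega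
  rw [hn1]
  have hsplit : Finset.range (2 * k) = Finset.range k ∪ Finset.Ico k (2 * k) := by
    rw [Finset.range_eq_Ico, Finset.range_eq_Ico]
    exact (Finset.Ico_union_Ico_eq_Ico (a := 0) (b := k) (c := 2 * k) (by omega) (by omega)).symm
  rw [hsplit, Finset.sum_union (by
    rw [Finset.range_eq_Ico]
    exact Finset.Ico_disjoint_Ico_consecutive 0 k (2 * k))]
  have h1 : (∑ v ∈ Finset.range k, (2 * v - (v - (n - v - 2))))
      = ∑ v ∈ Finset.range k, 2 * v := by
    refine Finset.sum_congr rfl fun v hv => ?_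
    have := Finset.mem_range.mp hv
    omega
  have h2 : (∑ v ∈ Finset.Ico k (2 * k), (2 * v - (v - (n - v - 2))))
      = ∑ v ∈ Finset.Ico k (2 * k), (n - 2) := by
    refine Finset.sum_congr rfl fun v hv => ?_
    have := Finset.mem_Ico.mp hv
    omega
  rw [h1, h2, Finset.sum_const, Nat.card_Ico, smul_eq_mul]
  have hgauss : (∑ v ∈ Finset.range k, 2 * v) = k * (k - 1) := by
    have := Finset.sum_range_id_mul_two k
    calc (∑ v ∈ Finset.range k, 2 * v) = (∑ v ∈ Finset.range k, v) * 2 := by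
          rw [Finset.sum_mul]; exact Finset.sum_congr rfl fun v _ => by ring
      _ = k * (k - 1) := this
  rw [hgauss]
  obtain ⟨m, hm⟩ : ∃ m, k = m + 1 := ⟨k - 1, by omega⟩
  subst hm
  have e1 : m + 1 - 1 = m := by omega
  have e2 : 2 * (m + 1) - (m + 1) = m + 1 := by omega
  have e3 : n - 2 = 2 * m + 1 := by omega
  have e4 : 3 * n - 7 = 6 * m + 2 := by omega
  rw [e1, e2, e3, e4]
  have e5 : 2 * (m + 1) * (6 * m + 2) = 4 * ((m + 1) * m + (m + 1) * (2 * m + 1)) := by ring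
  rw [e5, Nat.mul_div_cancel_left _ (by norm_num)]
end

section
/- Let n ≥ 3 and let G_n be the simple graph on vertex set {1,…,n−1} in which distinct vertices i and j are adjacent iff i+j ≥ n (the compressed zero divisor graph of ℤ_{p^n}). Then for all distinct vertices i, j: the shortest-path distance satisfies d(i,j) = 1 if i+j ≥ n, and d(i,j) = 2 if i+j < n. In particular G_n is connected with diameter at most 2. -/
theorem dist_compressedZdGraph (n : ℕ) (hn : 3 ≤ n) :
    (∀ i j : Fin (n - 1), i ≠ j →
        (n ≤ (i : ℕ) + 1 + ((j : ℕ) + 1) → (compressedZdGraph n).dist i j = 1) ∧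
        ((i : ℕ) + 1 + ((j : ℕ) + 1) < n → (compressedZdGraph n).dist i j = 2)) ∧
      (compressedZdGraph n).Connected ∧ (compressedZdGraph n).diam ≤ 2 := by
  set G := compressedZdGraph n with hG
  have ht : n - 2 < n - 1 := by omega
  set t : Fin (n - 1) := ⟨n - 2, ht⟩ with htdef
  -- any vertex distinct from t is adjacent to t
  have hadj_t : ∀ i : Fin (n - 1), i ≠ t → G.Adj i t := by
    intro i hi
    refine ⟨hi, ?_⟩
    simp only [htdef]
    omega
  -- a walk of length ≤ 2 between any two vertices
  have hwalk : ∀ i j : Fin (n - 1), ∃ p : G.Walk i j, p.length ≤ 2 := by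
    intro i j
    by_cases hij : i = j
    · subst hij; exact ⟨SimpleGraph.Walk.nil, by simp⟩
    by_cases hadj : n ≤ (i : ℕ) + 1 + ((j : ℕ) + 1)
    · exact ⟨SimpleGraph.Walk.cons (show G.Adj i j from ⟨hij, hadj⟩) SimpleGraph.Walk.nil, by simp⟩
    · have hit : i ≠ t := by
        intro h; apply hadj; rw [h]; simp only [htdef]
        have := j.isLt; omega
      have hjt : j ≠ t := by
        intro h; apply hadj; rw [h]; simp only [htdef]
        have := i.isLt; omega
      exact ⟨SimpleGraph.Walk.cons (hadj_t i hit)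
        (SimpleGraph.Walk.cons (G.adj_symm (hadj_t j hjt)) SimpleGraph.Walk.nil), by simp⟩
  have hconn : G.Connected := by
    have : Nonempty (Fin (n - 1)) := ⟨t⟩
    refine SimpleGraph.Connected.mk ?_
    intro i j
    obtain ⟨p, _⟩ := hwalk i j
    exact ⟨p⟩
  refine ⟨?_, hconn, ?_⟩
  · intro i j hij
    constructor
    · intro h
      exact SimpleGraph.dist_eq_one_iff_adj.mpr ⟨hij, h⟩
    · intro h
      have h2 : G.dist i j ≤ 2 := by
        obtain ⟨p, hp⟩ := hwalk i j
        exact le_trans (SimpleGraph.dist_le p) hp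
      have h0 : 0 < G.dist i j := hconn.pos_dist_of_ne hij
      have h1 : G.dist i j ≠ 1 := by
        intro h1
        have := SimpleGraph.dist_eq_one_iff_adj.mp h1
        exact absurd this.2 (by omega)
      omega
  · have : G.ediam ≤ 2 := by
      apply SimpleGraph.ediam_le_of_edist_le
      intro u v
      obtain ⟨p, hp⟩ := hwalk u v
      calc G.edist u v ≤ p.length := SimpleGraph.edist_le p
        _ ≤ 2 := by exact_mod_cast hp
    calc G.diam = G.ediam.toNat := rfl
      _ ≤ (2 : ℕ∞).toNat := ENat.toNat_le_toNat this (by simp)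
      _ = 2 := rfl
end

section
/- Let n ≥ 2 and let G_n be the simple graph on vertex set {1,…,n−1} in which distinct vertices i and j are adjacent iff i+j ≥ n. Then the number of edges of G_n equals (n−1)(n−2)/2 − ⌊(n−2)²/4⌋. -/
open Finset in
lemma auxR_czd (m c : ℕ) : (∑ j ∈ Finset.range m, if c ≤ j then (1:ℕ) else 0) = m - c := by
  induction m with
  | zero => simp
  | succ k ih => rw [Finset.sum_range_succ, ih]; split <;> omega

lemma finAux_czd (m c : ℕ) : (Finset.univ.filter (fun j : Fin m => c ≤ (j:ℕ))).card = m - c := by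
  rw [Finset.card_filter, Fin.sum_univ_eq_sum_range (fun i => if c ≤ i then (1:ℕ) else 0) m,
    auxR_czd]

instance (n : ℕ) : DecidableRel (compressedZdGraph n).Adj :=
  fun i j => inferInstanceAs (Decidable (i ≠ j ∧ n ≤ (i : ℕ) + 1 + ((j : ℕ) + 1)))

lemma degAux (n : ℕ) (hn : 2 ≤ n) (v : Fin (n-1)) :
    (compressedZdGraph n).degree v
      = (v:ℕ) + 1 - (if n ≤ 2*((v:ℕ)+1) then 1 else 0) := by
  have hv : (v:ℕ) < n - 1 := v.isLt
  rw [SimpleGraph.degree, SimpleGraph.neighborFinset_eq_filter]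
  have h1 : (Finset.univ.filter (fun j => (compressedZdGraph n).Adj v j))
      = (Finset.univ.filter (fun j : Fin (n-1) => n - 2 - (v:ℕ) ≤ (j:ℕ))).erase v := by
    ext j
    simp only [Finset.mem_filter, Finset.mem_erase, Finset.mem_univ, true_and]
    change (v ≠ j ∧ n ≤ (v:ℕ) + 1 + ((j:ℕ) + 1)) ↔ _
    constructor
    · rintro ⟨h1, h2⟩; exact ⟨h1.symm, by omega⟩
    · rintro ⟨h1, h2⟩; exact ⟨h1.symm, by omega⟩
  rw [h1, Finset.card_erase_eq_ite, finAux_czd]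
  have hvm : v ∈ Finset.univ.filter (fun j : Fin (n-1) => n - 2 - (v:ℕ) ≤ (j:ℕ)) ↔
      n ≤ 2*((v:ℕ)+1) := by
    simp only [Finset.mem_filter, Finset.mem_univ, true_and]
    omega
  split
  · next h => rw [hvm] at h; rw [if_pos h]; omega
  · next h => rw [hvm] at h; rw [if_neg h]; omega

/-- The number of edges of the compressed zero divisor graph equals
`(n-1)(n-2)/2 − ⌊(n-2)²/4⌋`. -/
theorem card_edges_compressedZdGraph (n : ℕ) (hn : 2 ≤ n) :
    (compressedZdGraph n).edgeFinset.card = (n - 1) * (n - 2) / 2 - (n - 2) ^ 2 / 4 := by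
  have hds := (compressedZdGraph n).sum_degrees_eq_twice_card_edges
  have h2 : ∑ v, (compressedZdGraph n).degree v
      = ∑ i ∈ Finset.range (n-1), ((i + 1) - (if n ≤ 2*(i+1) then 1 else 0)) := by
    rw [← Fin.sum_univ_eq_sum_range (fun i => (i + 1) - (if n ≤ 2*(i+1) then 1 else 0)) (n-1)]
    exact Finset.sum_congr rfl fun v _ => degAux n hn v
  have h3 : ∑ i ∈ Finset.range (n-1), ((i + 1) - (if n ≤ 2*(i+1) then 1 else 0))
      = (∑ i ∈ Finset.range (n-1), (i+1)) -
        (∑ i ∈ Finset.range (n-1), (if n ≤ 2*(i+1) then 1 else 0)) := by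
    apply Finset.sum_tsub_distrib
    intro i _
    split <;> omega
  have h4 : (∑ i ∈ Finset.range (n-1), (i+1)) * 2 = n * (n-1) := by
    obtain ⟨m, rfl⟩ : ∃ m, n = m + 1 := ⟨n - 1, by omega⟩
    have h := Finset.sum_range_id_mul_two (m+1)
    rw [Finset.sum_range_succ' (fun i => i) m] at h
    simpa using h
  have h5 : (∑ i ∈ Finset.range (n-1), (if n ≤ 2*(i+1) then 1 else 0))
      = (n-1) - (n-1)/2 := by
    rw [← auxR_czd (n-1) ((n-1)/2)]
    exact Finset.sum_congr rfl fun i _ => if_congr (by omega) rfl rfl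
  -- let S be the triangular sum
  set S := ∑ i ∈ Finset.range (n-1), (i+1) with hS
  set E := (compressedZdGraph n).edgeFinset.card with hE
  have key : 2 * E = S - ((n-1) - (n-1)/2) := by
    rw [← hds, h2, h3, h5]
  rcases Nat.even_or_odd n with ⟨k, hk⟩ | ⟨k, hk⟩
  · -- n = 2k
    have hk1 : 1 ≤ k := by omega
    obtain ⟨K, hK⟩ : ∃ K, k = K + 1 := ⟨k - 1, by omega⟩
    have hSval : S = k * (2*k - 1) := by
      have : S * 2 = (k * (2*k-1)) * 2 := by
        rw [h4, show n = 2*k by omega, show 2*k - 1 = 2*k-1 from rfl]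
        have : 2*k*(2*k-1) = (k*(2*k-1))*2 := by
          rw [show (2*k) = k*2 by ring]; ring
        omega
      omega
    have hcount : (n-1) - (n-1)/2 = k := by omega
    have hkey2 : 2 * E = k * (2*k-1) - k := by rw [key, hSval, hcount]
    have hgoal1 : (n-1)*(n-2)/2 = (2*k-1)*(k-1) := by
      have e1 : (n-1)*(n-2) = ((2*k-1)*(k-1))*2 := by
        rw [show n-1 = 2*k-1 by omega, show n-2 = 2*(k-1) by omega]; ring
      omega
    have hgoal2 : (n-2)^2/4 = (k-1)*(k-1) := by
      have e2 : (n-2)^2 = ((k-1)*(k-1))*4 := by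
        rw [show n-2 = 2*(k-1) by omega]; ring
      omega
    rw [hgoal1, hgoal2]
    subst hK
    have e3 : (K+1) * (2*(K+1)-1) = 2*(K*K) + 3*K + 1 := by
      rw [show 2*(K+1)-1 = 2*K+1 by omega]; ring
    have e4 : (2*(K+1)-1)*((K+1)-1) = 2*(K*K) + K := by
      rw [show 2*(K+1)-1 = 2*K+1 by omega, show (K+1)-1 = K by omega]; ring
    have e5 : ((K+1)-1)*((K+1)-1) = K*K := by rw [show (K+1)-1 = K by omega]
    rw [e4, e5]; rw [e3] at hkey2
    generalize K*K = t at hkey2 ⊢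
    omega
  · -- n = 2k+1
    have hk1 : 1 ≤ k := by omega
    obtain ⟨K, hK⟩ : ∃ K, k = K + 1 := ⟨k - 1, by omega⟩
    have hSval : S = (2*k+1) * k := by
      have : S * 2 = ((2*k+1) * k) * 2 := by
        rw [h4, show n = 2*k+1 by omega]
        have : (2*k+1)*(2*k+1-1) = ((2*k+1)*k)*2 := by
          rw [show 2*k+1-1 = k*2 by omega]; ring
        omega
      omega
    have hcount : (n-1) - (n-1)/2 = k := by omega
    have hkey2 : 2 * E = (2*k+1)*k - k := by rw [key, hSval, hcount]
    have hgoal1 : (n-1)*(n-2)/2 = k*(2*k-1) := by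
      have e1 : (n-1)*(n-2) = (k*(2*k-1))*2 := by
        rw [show n-1 = k*2 by omega, show n-2 = 2*k-1 by omega]; ring
      omega
    have hgoal2 : (n-2)^2/4 = k*k - k := by
      have e2 : (n-2)^2 = (k*k - k)*4 + 1 := by
        rw [show n-2 = 2*K+1 by omega, show k*k - k = (K+1)*K by rw [hK]; ring_nf; omega]
        ring
      omega
    rw [hgoal1, hgoal2]
    subst hK
    have e3 : (2*(K+1)+1)*(K+1) = 2*(K*K) + 5*K + 3 := by ring
    have e4 : (K+1)*(2*(K+1)-1) = 2*(K*K) + 3*K + 1 := by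
      rw [show 2*(K+1)-1 = 2*K+1 by omega]; ring
    have e5 : (K+1)*(K+1) = K*K + 2*K + 1 := by ring
    rw [e4, e5]; rw [e3] at hkey2
    generalize K*K = t at hkey2 ⊢
    omega
end
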